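/- There is no tuple of distinct positive integers x_1,…,x_9, each of the form 2^a·3^b, with 1/x_1 + ⋯ + 1/x_9 = 1, such that 2 does not appear among the x_i, max_i v_2(x_i) = 1, and 2 divides at least one x_i. -/

import Mathlib

lemma geo_bound (N : ℕ) :
    ∑ b ∈ Finset.Icc 1 N, ((1:ℚ)/3) ^ b ≤ 1/2 - (1/2) * (1/3) ^ N := by
  induction N with
  | zero => simp
  | succ n ih =>
    rw [Finset.sum_Icc_succ_top (by omega)]
    have h : ((1:ℚ)/3) ^ (n+1) = (1/3) ^ n * (1/3) := by rw [pow_succ]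
    rw [h]
    nlinarith [ih]

set_option maxHeartbeats 800000 in
theorem stmt_9 :
    ¬ ∃ x : Fin 9 → ℕ, Function.Injective x ∧ (∀ i, 0 < x i) ∧
      (∀ i, ∃ a b : ℕ, x i = 2 ^ a * 3 ^ b) ∧
      (∑ i, (1 : ℚ) / x i = 1) ∧
      (∀ i, x i ≠ 2) ∧
      Finset.univ.sup (fun i => padicValNat 2 (x i)) = 1 ∧
      (∃ i, 2 ∣ x i) := by
  rintro ⟨x, hinj, hpos, hform, hsum, hne2, hsup, -⟩
  -- every x i is of the form (1 or 2) * 3^b with b ≥ 1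
  have key : ∀ i, ∃ p : ℕ × Bool, 1 ≤ p.1 ∧ x i = (if p.2 then 2 else 1) * 3 ^ p.1 := by
    intro i
    obtain ⟨a, b, hab⟩ := hform i
    have hv : padicValNat 2 (x i) = a := by
      rw [hab, padicValNat.mul (by positivity) (by positivity),
        padicValNat.prime_pow, padicValNat.eq_zero_of_not_dvd, add_zero]
      intro h
      have := Nat.Prime.dvd_of_dvd_pow Nat.prime_two h
      omega
    have ha : a ≤ 1 := by
      have h1 : padicValNat 2 (x i) ≤ 1 := by
        simpa [hsup] using
          Finset.le_sup (f := fun i => padicValNat 2 (x i)) (Finset.mem_univ i)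
      omega
    have hb : 1 ≤ b := by
      by_contra hb0
      have hb0 : b = 0 := by omega
      interval_cases a
      · -- x i = 1, contradicts the sum being 1
        have hx1 : x i = 1 := by simp [hab, hb0]
        exfalso
        set j : Fin 9 := if i = 0 then 1 else 0 with hj
        have hij : j ≠ i := by
          rcases eq_or_ne i 0 with h | h <;> simp [hj, h] <;> omega
        have hnn : ∀ k ∈ Finset.univ.erase i, (0:ℚ) ≤ 1 / x k := by
          intro k _; positivity
        have hjmem : j ∈ Finset.univ.erase i := Finset.mem_erase.mpr ⟨hij, Finset.mem_univ j⟩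
        have h1 : (1:ℚ) / x j ≤ ∑ k ∈ Finset.univ.erase i, (1:ℚ) / x k :=
          Finset.single_le_sum hnn hjmem
        have h2 : (1:ℚ) / x i + ∑ k ∈ Finset.univ.erase i, (1:ℚ) / x k = ∑ k, (1:ℚ) / x k :=
          Finset.add_sum_erase Finset.univ (fun k => (1:ℚ) / x k) (Finset.mem_univ i)
        have hxj : (0:ℚ) < 1 / x j := by
          have := hpos j
          positivity
        rw [hsum] at h2
        have hxi : (1:ℚ) / x i = 1 := by rw [hx1]; norm_num
        rw [hxi] at h2
        linarith
      · exact hne2 i (by simp [hab, hb0])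
    refine ⟨(b, a = 1), hb, ?_⟩
    interval_cases a <;> simp [hab]
  choose y hy1 hy2 using key
  have hyinj : Function.Injective y := by
    intro i j h
    apply hinj
    rw [hy2 i, hy2 j, h]
  set F : ℕ × Bool → ℚ := fun p => 1 / ((if p.2 then 2 else 1) * 3 ^ p.1) with hF
  have hxF : ∀ i, (1:ℚ) / x i = F (y i) := by
    intro i
    rw [hy2 i, hF]
    push_cast
    simp
  set N : ℕ := Finset.univ.sup fun i => (y i).1 with hN
  have hmem : ∀ i, y i ∈ Finset.Icc 1 N ×ˢ (Finset.univ : Finset Bool) := by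
    intro i
    rw [Finset.mem_product, Finset.mem_Icc]
    exact ⟨⟨hy1 i, Finset.le_sup (f := fun i => (y i).1) (Finset.mem_univ i)⟩,
      Finset.mem_univ _⟩
  have h1 : (1:ℚ) = ∑ i, F (y i) := by
    rw [← hsum]
    exact Finset.sum_congr rfl fun i _ => hxF i
  have h2 : ∑ i, F (y i) = ∑ p ∈ Finset.univ.image y, F p :=
    (Finset.sum_image (fun i _ j _ h => hyinj h)).symm
  have h3 : ∑ p ∈ Finset.univ.image y, F p ≤
      ∑ p ∈ Finset.Icc 1 N ×ˢ (Finset.univ : Finset Bool), F p := by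
    apply Finset.sum_le_sum_of_subset_of_nonneg
    · intro p hp
      obtain ⟨i, -, rfl⟩ := Finset.mem_image.mp hp
      exact hmem i
    · intro p _ _
      have : (0:ℚ) < (if p.2 then 2 else 1) * 3 ^ p.1 := by
        rcases p with ⟨b, _ | _⟩ <;> positivity
      rw [hF]
      positivity
  have h4 : ∑ p ∈ Finset.Icc 1 N ×ˢ (Finset.univ : Finset Bool), F p
      = ∑ b ∈ Finset.Icc 1 N, (3/2) * ((1:ℚ)/3) ^ b := by
    rw [Finset.sum_product]
    refine Finset.sum_congr rfl fun b _ => ?_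
    rw [Fintype.sum_bool, hF]
    have h3b : (3:ℚ) ^ b ≠ 0 := by positivity
    simp only [if_true, if_false, Bool.false_eq_true, one_mul, div_pow, one_pow]
    field_simp
    ring
  have h5 : ∑ b ∈ Finset.Icc 1 N, (3/2) * ((1:ℚ)/3) ^ b ≤ 3/4 := by
    rw [← Finset.mul_sum]
    have := geo_bound N
    have hp : (0:ℚ) ≤ (1/3) ^ N := by positivity
    nlinarith
  linarith [h1, h2 ▸ h1, h3, h4 ▸ h3, h5]
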